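/- Let Z be positive definite with extremal eigenvalues a ≥ b > 0 and let E be a rank-one orthogonal projection h⊗h for a unit vector h. Then the operator norm of Z^{-1/2} E Z E Z^{-1/2} is at most (a+b)²/(4ab). -/

import Mathlib

open scoped ComplexOrder
open Matrix

private lemma kant {n : ℕ} (a b : ℝ) (hb : 0 < b) (hba : b ≤ a)
    (lam p : Fin n → ℝ) (hp : ∀ i, 0 ≤ p i) (hsum : ∑ i, p i = 1)
    (hl1 : ∀ i, b ≤ lam i) (hl2 : ∀ i, lam i ≤ a) :
    (∑ i, lam i * p i) * (∑ i, (lam i)⁻¹ * p i) ≤ (a + b) ^ 2 / (4 * a * b) := by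
  have ha : 0 < a := lt_of_lt_of_le hb hba
  set m := ∑ i, lam i * p i with hm
  have hm0 : 0 ≤ m := Finset.sum_nonneg fun i _ =>
    mul_nonneg (le_trans hb.le (hl1 i)) (hp i)
  have key : (∑ i, (lam i)⁻¹ * p i) ≤ (a + b - m) / (a * b) := by
    have step : ∀ i ∈ Finset.univ, (lam i)⁻¹ * p i ≤ ((a + b - lam i) / (a * b)) * p i := by
      intro i _
      apply mul_le_mul_of_nonneg_right _ (hp i)
      rw [inv_eq_one_div, div_le_div_iff₀ (lt_of_lt_of_le hb (hl1 i)) (by positivity)]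
      nlinarith [hl1 i, hl2 i]
    calc (∑ i, (lam i)⁻¹ * p i) ≤ ∑ i, ((a + b - lam i) / (a * b)) * p i :=
          Finset.sum_le_sum step
      _ = ((a + b) * (∑ i, p i) - m) / (a * b) := by
          rw [hm, Finset.mul_sum, ← Finset.sum_sub_distrib, Finset.sum_div]
          exact Finset.sum_congr rfl fun i _ => by ring
      _ = (a + b - m) / (a * b) := by rw [hsum, mul_one]
  calc m * (∑ i, (lam i)⁻¹ * p i) ≤ m * ((a + b - m) / (a * b)) :=
        mul_le_mul_of_nonneg_left key hm0
    _ ≤ (a + b) ^ 2 / (4 * a * b) := by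
        rw [mul_div_assoc', div_le_div_iff₀ (by positivity) (by positivity)]
        nlinarith [mul_nonneg (mul_pos ha hb).le (sq_nonneg (a + b - 2 * m))]

private lemma quad {n : ℕ} (U : Matrix (Fin n) (Fin n) ℂ)
    (d : Fin n → ℂ) (w : Fin n → ℂ) :
    star w ⬝ᵥ ((U * diagonal d * star U) *ᵥ w)
      = ∑ i, d i * (star ((star U *ᵥ w) i) * (star U *ᵥ w) i) := by
  set g := star U *ᵥ w with hg
  have hsg : star g = star w ᵥ* U := by
    rw [hg, star_mulVec, star_eq_conjTranspose, conjTranspose_conjTranspose]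
  rw [← mulVec_mulVec, ← mulVec_mulVec, dotProduct_mulVec, ← hsg]
  simp only [dotProduct, mulVec_diagonal]
  exact Finset.sum_congr rfl fun i _ => by simp only [Pi.star_apply]; ring


private lemma vmv_mulVec {n : ℕ} (v t x : Fin n → ℂ) :
    vecMulVec v t *ᵥ x = (t ⬝ᵥ x) • v := by
  funext i
  simp only [mulVec, dotProduct, vecMulVec_apply, Pi.smul_apply, smul_eq_mul, Finset.sum_mul]
  exact Finset.sum_congr rfl fun j _ => by ring

theorem stmt_17 (n : ℕ) (Z : Matrix (Fin n) (Fin n) ℂ) (hZ : Z.PosDef) (a b : ℝ)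
    (ha : ∀ i, hZ.1.eigenvalues i ≤ a) (ha' : ∃ i, hZ.1.eigenvalues i = a)
    (hb : ∀ i, b ≤ hZ.1.eigenvalues i) (hb' : ∃ i, hZ.1.eigenvalues i = b)
    (h : EuclideanSpace ℂ (Fin n)) (hh : ‖h‖ = 1)
    (E : Matrix (Fin n) (Fin n) ℂ) (hE : E = Matrix.of fun i j => h i * star (h j)) :
    ‖Matrix.toEuclideanCLM (𝕜 := ℂ)
        (hZ.1.cfc (fun x : ℝ => x ^ (-(1 / 2) : ℝ)) * E * Z * E *
          hZ.1.cfc (fun x : ℝ => x ^ (-(1 / 2) : ℝ)))‖ ≤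
      (a + b) ^ 2 / (4 * a * b) := by
  classical
  obtain ⟨ia, hia⟩ := ha'
  obtain ⟨ib, hib⟩ := hb'
  have hbpos : 0 < b := hib ▸ hZ.eigenvalues_pos ib
  have hba : b ≤ a := hia ▸ hb ia
  have hapos : 0 < a := lt_of_lt_of_le hbpos hba
  set lam := hZ.1.eigenvalues with hlam
  set U : Matrix (Fin n) (Fin n) ℂ := (hZ.1.eigenvectorUnitary : Matrix (Fin n) (Fin n) ℂ)
    with hUdef
  have hU1 : U * star U = 1 := Unitary.mul_star_self_of_mem hZ.1.eigenvectorUnitary.2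
  have hU2 : star U * U = 1 := Unitary.star_mul_self_of_mem hZ.1.eigenvectorUnitary.2
  set f : ℝ → ℝ := fun x : ℝ => x ^ (-(1 / 2) : ℝ) with hf
  set S := hZ.1.cfc f with hSdef
  have hScfc : S = U * diagonal (RCLike.ofReal ∘ f ∘ lam) * star U := rfl
  -- the vector h as an ordinary vector
  set w : Fin n → ℂ := fun i => h i with hwdef
  set g : Fin n → ℂ := star U *ᵥ w with hg
  set p : Fin n → ℝ := fun i => Complex.normSq (g i) with hp
  have hgp : ∀ i, star (g i) * g i = (p i : ℂ) := by
    intro i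
    rw [hp, mul_comm, Complex.star_def, Complex.mul_conj]

  -- sum of p equals 1
  have hsum : ∑ i, p i = 1 := by
    have h1 : star w ⬝ᵥ ((U * diagonal (fun _ : Fin n => (1:ℂ)) * star U) *ᵥ w)
        = ∑ i, (1:ℂ) * (star (g i) * g i) := quad U _ w
    rw [diagonal_one, mul_one, hU1, one_mulVec] at h1
    simp only [one_mul, hgp] at h1
    have h2 : inner (𝕜 := ℂ) h h = ((∑ i, p i : ℝ) : ℂ) := by
      rw [EuclideanSpace.inner_eq_star_dotProduct]
      push_cast
      exact (dotProduct_comm _ _).trans h1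
    have h4 := InnerProductSpace.norm_sq_eq_re_inner (𝕜 := ℂ) h
    rw [h2, hh] at h4
    simpa using h4.symm
  have hppos : ∀ i, 0 ≤ p i := fun i => Complex.normSq_nonneg _
  have hlampos : ∀ i, 0 < lam i := fun i => hZ.eigenvalues_pos i
  have hm0 : 0 ≤ ∑ i, lam i * p i :=
    Finset.sum_nonneg fun i _ => mul_nonneg (le_trans hbpos.le (hb i)) (hppos i)
  have hm0' : 0 ≤ ∑ i, (lam i)⁻¹ * p i :=
    Finset.sum_nonneg fun i _ => mul_nonneg (inv_nonneg.mpr (hlampos i).le) (hppos i)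
  -- value of the quadratic form of Z
  set c : ℂ := star w ⬝ᵥ (Z *ᵥ w) with hc
  have hcval : c = ((∑ i, lam i * p i : ℝ) : ℂ) := by
    rw [hc]
    conv_lhs => rw [hZ.1.spectral_theorem, Unitary.conjStarAlgAut_apply]
    rw [quad]
    simp only [Function.comp_apply, hgp]
    push_cast
    exact Finset.sum_congr rfl fun i _ => by rw [← hgp]; rfl
  -- S is hermitian
  have hSherm : star S = S := by
    have hsa : IsSelfAdjoint (cfc f Z) := cfc_predicate f Z
    rwa [hZ.1.cfc_eq] at hsa
  have hSsymm : ∀ k j, star (S k j) = S j k := by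
    intro k j
    conv_rhs => rw [← hSherm]
    rw [star_eq_conjTranspose, conjTranspose_apply]
  -- S * S
  have hSS : S * S = U * diagonal (RCLike.ofReal ∘ fun i => (lam i)⁻¹) * star U := by
    rw [hScfc]
    calc (U * diagonal (RCLike.ofReal ∘ f ∘ lam) * star U)
          * (U * diagonal (RCLike.ofReal ∘ f ∘ lam) * star U)
        = U * (diagonal (RCLike.ofReal ∘ f ∘ lam) * (star U * U)
            * diagonal (RCLike.ofReal ∘ f ∘ lam)) * star U := by
          simp only [mul_assoc]
      _ = U * diagonal (RCLike.ofReal ∘ fun i => (lam i)⁻¹) * star U := by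
          rw [hU2, mul_one, diagonal_mul_diagonal]
          have hdd : (fun i => (RCLike.ofReal ∘ f ∘ lam : Fin n → ℂ) i
                * (RCLike.ofReal ∘ f ∘ lam : Fin n → ℂ) i)
              = (RCLike.ofReal ∘ fun i => (lam i)⁻¹ : Fin n → ℂ) := by
            funext i
            simp only [Function.comp_apply]
            rw [← RCLike.ofReal_mul]
            congr 1
            show (lam i) ^ (-(1/2) : ℝ) * (lam i) ^ (-(1/2) : ℝ) = (lam i)⁻¹
            rw [← Real.rpow_add (hlampos i), show (-(1/2) + -(1/2) : ℝ) = -1 by norm_num,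
              Real.rpow_neg_one]
          rw [hdd]
  -- E * Z * E = c • E
  have hEw : E = Matrix.of fun i j => w i * star (w j) := hE
  have hEZE : E * Z * E = c • E := by
    rw [hEw]
    ext i j
    simp only [mul_apply, Matrix.smul_apply, of_apply, smul_eq_mul, hc, dotProduct, mulVec,
      Finset.sum_mul, Finset.mul_sum]
    rw [Finset.sum_comm]
    exact Finset.sum_congr rfl fun k _ => Finset.sum_congr rfl fun l _ => by
      simp only [Pi.star_apply]; ring
  -- the rank one picture
  set v : Fin n → ℂ := S *ᵥ w with hv
  have hstarv : ∀ j, ∑ k, star (w k) * S k j = star (v j) := by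
    intro j
    rw [hv]
    show _ = star (∑ k, S j k * w k)
    rw [star_sum]
    refine Finset.sum_congr rfl fun k _ => ?_
    rw [star_mul', hSsymm j k, mul_comm]
  have hSES : S * E * S = vecMulVec v (star v) := by
    rw [hEw]
    ext i j
    simp only [mul_apply, of_apply, vecMulVec_apply, Pi.star_apply]
    calc ∑ k, (∑ l, S i l * (w l * star (w k))) * S k j
        = (∑ l, S i l * w l) * (∑ k, star (w k) * S k j) := by
          rw [Finset.sum_mul_sum, Finset.sum_comm]
          refine Finset.sum_congr rfl fun k _ => ?_
          rw [Finset.sum_mul]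
          exact Finset.sum_congr rfl fun l _ => by ring
      _ = v i * star (v j) := by rw [hstarv]; rfl
  -- quadratic form of S * S
  have hvv : star v ⬝ᵥ v = ((∑ i, (lam i)⁻¹ * p i : ℝ) : ℂ) := by
    have h5 : star v ⬝ᵥ v = star w ⬝ᵥ ((S * S) *ᵥ w) := by
      rw [hv, star_mulVec, dotProduct_mulVec, vecMul_vecMul, ← star_eq_conjTranspose, hSherm,
        dotProduct_mulVec]
    rw [h5, hSS, quad]
    simp only [Function.comp_apply, hgp]
    push_cast
    exact Finset.sum_congr rfl fun i _ => by rw [← hgp]; rfl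
  -- the whole matrix
  have hM : S * E * Z * E * S = c • vecMulVec v (star v) := by
    rw [show S * E * Z * E * S = S * (E * Z * E) * S by simp only [mul_assoc], hEZE,
      Matrix.mul_smul, Matrix.smul_mul, hSES]
  set vE : EuclideanSpace ℂ (Fin n) := (WithLp.equiv 2 (Fin n → ℂ)).symm v with hvE
  have hvEnorm : ‖vE‖ ^ 2 = ∑ i, (lam i)⁻¹ * p i := by
    have h6 := InnerProductSpace.norm_sq_eq_re_inner (𝕜 := ℂ) vE
    have h7 : inner (𝕜 := ℂ) vE vE = ((∑ i, (lam i)⁻¹ * p i : ℝ) : ℂ) := by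
      rw [EuclideanSpace.inner_eq_star_dotProduct, hvE]
      exact (dotProduct_comm _ _).trans hvv
    rw [h7] at h6
    simpa using h6
  have hcnorm : ‖c‖ = ∑ i, lam i * p i := by
    rw [hcval, Complex.norm_real, Real.norm_eq_abs]
    exact abs_of_nonneg hm0
  have hbound : ∀ x : EuclideanSpace ℂ (Fin n),
      ‖toEuclideanCLM (𝕜 := ℂ) (S * E * Z * E * S) x‖
        ≤ ((∑ i, lam i * p i) * (∑ i, (lam i)⁻¹ * p i)) * ‖x‖ := by
    intro x
    have hx : toEuclideanCLM (𝕜 := ℂ) (S * E * Z * E * S) x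
        = (c * (star v ⬝ᵥ (WithLp.equiv 2 (Fin n → ℂ) x))) • vE := by
      apply (WithLp.equiv 2 (Fin n → ℂ)).injective
      simp only [WithLp.equiv_apply, ofLp_toEuclideanCLM, WithLp.ofLp_smul, hvE, WithLp.equiv_symm_apply, WithLp.ofLp_toLp]
      rw [hM, smul_mulVec, vmv_mulVec, smul_smul]
    have hinner : star v ⬝ᵥ (WithLp.equiv 2 (Fin n → ℂ) x) = inner (𝕜 := ℂ) vE x := by
      rw [EuclideanSpace.inner_eq_star_dotProduct, hvE]
      exact dotProduct_comm _ _
    rw [hx, norm_smul, norm_mul, hinner, hcnorm]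
    calc (∑ i, lam i * p i) * ‖inner (𝕜 := ℂ) vE x‖ * ‖vE‖
        ≤ (∑ i, lam i * p i) * (‖vE‖ * ‖x‖) * ‖vE‖ := by
          gcongr
          exact norm_inner_le_norm vE x
      _ = ((∑ i, lam i * p i) * (∑ i, (lam i)⁻¹ * p i)) * ‖x‖ := by
          rw [← hvEnorm]; ring
  calc ‖toEuclideanCLM (𝕜 := ℂ) (S * E * Z * E * S)‖
      ≤ (∑ i, lam i * p i) * (∑ i, (lam i)⁻¹ * p i) :=
        ContinuousLinearMap.opNorm_le_bound _ (mul_nonneg hm0 hm0') hbound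
    _ ≤ (a + b) ^ 2 / (4 * a * b) := kant a b hbpos hba lam p hppos hsum hb ha
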